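/- (Estimate for nonsymmetry at a contact point.) Let v : ℝ^N → ℝ be a bounded Borel function, Γ its concave envelope on Ω_{Λε+τε²}, and K_v its contact set. If x₀ ∈ K_v, then for every ξ in the superdifferential ∇Γ(x₀), liminf_{x→x₀} [ sup_{|z|<Λε} δ⁺_{Ω,τε²} v(x,z) / ε² ] ≤ τ·|ξ|. -/

import Mathlib

open MeasureTheory Metric Filter Set Function
open scoped Topology Classical RealInnerProductSpace symmDiff ENNReal

noncomputable section

def extDom {N : ℕ} (Ω : Set (EuclideanSpace ℝ (Fin N))) (lam t ε : ℝ) :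
    Set (EuclideanSpace ℝ (Fin N)) :=
  {x | Metric.infDist x Ω < lam * ε + t * ε ^ 2}

def envelope {N : ℕ} (Ω : Set (EuclideanSpace ℝ (Fin N))) (lam t ε : ℝ)
    (v : EuclideanSpace ℝ (Fin N) → ℝ) (x : EuclideanSpace ℝ (Fin N)) : ℝ :=
  if x ∈ extDom Ω lam t ε then
    sInf {w : ℝ | ∃ (a : ℝ) (ξ : EuclideanSpace ℝ (Fin N)),
      (∀ y ∈ extDom Ω lam t ε, max (v y) (sSup (v '' Ωᶜ)) ≤ a + ⟪ξ, y⟫) ∧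
      w = a + ⟪ξ, x⟫}
  else sSup (v '' Ωᶜ)

def superdiff {N : ℕ} (Ω : Set (EuclideanSpace ℝ (Fin N))) (lam t ε : ℝ)
    (Γ : EuclideanSpace ℝ (Fin N) → ℝ) (x : EuclideanSpace ℝ (Fin N)) :
    Set (EuclideanSpace ℝ (Fin N)) :=
  {ξ | ∀ z ∈ extDom Ω lam t ε, Γ z ≤ Γ x + ⟪ξ, z - x⟫}

def contactSet {N : ℕ} (Ω : Set (EuclideanSpace ℝ (Fin N))) (lam t ε : ℝ)
    (v : EuclideanSpace ℝ (Fin N) → ℝ) : Set (EuclideanSpace ℝ (Fin N)) :=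
  {x ∈ closure Ω |
    Filter.limsup (fun y => max (v y) (sSup (v '' Ωᶜ))) (𝓝 x) = envelope Ω lam t ε v x}

/-- Inner supremum in the second difference. -/
def innerSupAux {N : ℕ} (t ε : ℝ) (v : EuclideanSpace ℝ (Fin N) → ℝ)
    (x z : EuclideanSpace ℝ (Fin N)) : ℝ :=
  sSup {s : ℝ | ∃ h : EuclideanSpace ℝ (Fin N), ‖h‖ < t * ε ^ 2 ∧ s = v (x - z + h)}

/-- The normalized maximal second difference. -/
def locAux {N : ℕ} (lam t ε : ℝ) (v : EuclideanSpace ℝ (Fin N) → ℝ)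
    (x : EuclideanSpace ℝ (Fin N)) : ℝ :=
  sSup {w : ℝ | ∃ z : EuclideanSpace ℝ (Fin N), ‖z‖ < lam * ε ∧
    w = (v (x + z) + innerSupAux t ε v x z - 2 * v x) / ε ^ 2}

/-- Lemma 4.2 (Estimate for nonsymmetry at a contact point). -/
theorem contact_point_nonsymmetry_estimate
    (N : ℕ) (Λ τ ε : ℝ) (hΛ : 1 ≤ Λ) (hτ : 1 ≤ τ) (hε : 0 < ε)
    (Ω : Set (EuclideanSpace ℝ (Fin N))) (hΩo : IsOpen Ω) (hΩb : Bornology.IsBounded Ω)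
    (v : EuclideanSpace ℝ (Fin N) → ℝ) (hv : Measurable v) (hb : ∃ M, ∀ x, |v x| ≤ M)
    (hnorm : sSup (v '' Ωᶜ) = 0) (hpos : 0 < sSup (v '' Ω))
    (x₀ : EuclideanSpace ℝ (Fin N)) (hx₀ : x₀ ∈ contactSet Ω Λ τ ε v)
    (ξ : EuclideanSpace ℝ (Fin N))
    (hξ : ξ ∈ superdiff Ω Λ τ ε (envelope Ω Λ τ ε v) x₀) :
    Filter.liminf (fun x =>
        sSup {w : ℝ | ∃ z : EuclideanSpace ℝ (Fin N), ‖z‖ < Λ * ε ∧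
          w = (v (x + z) +
              sSup {s : ℝ | ∃ h : EuclideanSpace ℝ (Fin N), ‖h‖ < τ * ε ^ 2 ∧
                s = v (x - z + h)} - 2 * v x) / ε ^ 2})
      (𝓝 x₀) ≤ τ * ‖ξ‖ := by
  show Filter.liminf (locAux Λ τ ε v) (𝓝 x₀) ≤ τ * ‖ξ‖
  obtain ⟨M₀, hM₀⟩ := hb
  set M : ℝ := max M₀ 0 with hMdef
  have hM : ∀ x, |v x| ≤ M := fun x => (hM₀ x).trans (le_max_left _ _)
  have hM0 : (0:ℝ) ≤ M := le_max_right _ _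
  have hε2 : (0:ℝ) < ε ^ 2 := by positivity
  have hΛε : (0:ℝ) < Λ * ε := by nlinarith
  have hτε : (0:ℝ) < τ * ε ^ 2 := by nlinarith
  set R : ℝ := Λ * ε + τ * ε ^ 2 with hRdef
  have hR : 0 < R := by positivity
  obtain ⟨hx₀cl, hx₀lim⟩ := hx₀
  have hx₀ext : x₀ ∈ extDom Ω Λ τ ε := by
    simp only [extDom, Set.mem_setOf_eq]
    rw [Metric.infDist_zero_of_mem_closure hx₀cl]
    exact hR
  -- basic bounds
  have hbddc : ∀ b ∈ v '' Ωᶜ, b ≤ M := by rintro _ ⟨y, -, rfl⟩; exact (abs_le.mp (hM y)).2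
  have hΩsub : Ω ⊆ extDom Ω Λ τ ε := by
    intro x hx
    simp only [extDom, Set.mem_setOf_eq]
    rw [Metric.infDist_zero_of_mem hx]
    exact hR
  -- the envelope dominates max (v y) 0 on the extended domain
  have henv_ge : ∀ y ∈ extDom Ω Λ τ ε, max (v y) (sSup (v '' Ωᶜ)) ≤ envelope Ω Λ τ ε v y := by
    intro y hy
    unfold envelope
    rw [if_pos hy]
    apply le_csInf
    · refine ⟨M + ⟪(0 : EuclideanSpace ℝ (Fin N)), y⟫, M, 0, fun y' _ => ?_, rfl⟩
      rw [inner_zero_left, hnorm]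
      have := (abs_le.mp (hM y')).2
      simp only [add_zero]
      exact max_le this hM0
    · rintro w ⟨a, ξ', hmaj, rfl⟩
      exact hmaj y hy
  have henv_gev : ∀ y ∈ extDom Ω Λ τ ε, v y ≤ envelope Ω Λ τ ε v y :=
    fun y hy => le_trans (le_max_left _ _) (henv_ge y hy)
  have henv_nonneg : ∀ y ∈ extDom Ω Λ τ ε, 0 ≤ envelope Ω Λ τ ε v y := by
    intro y hy
    calc (0:ℝ) = sSup (v '' Ωᶜ) := hnorm.symm
      _ ≤ max (v y) (sSup (v '' Ωᶜ)) := le_max_right _ _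
      _ ≤ _ := henv_ge y hy
  set A : ℝ := envelope Ω Λ τ ε v x₀ with hAdef
  have hA0 : (0:ℝ) ≤ A := henv_nonneg x₀ hx₀ext
  have hmemext : ∀ y : EuclideanSpace ℝ (Fin N), ‖y - x₀‖ < R → y ∈ extDom Ω Λ τ ε := by
    intro y hy
    simp only [extDom, Set.mem_setOf_eq]
    calc Metric.infDist y Ω ≤ Metric.infDist x₀ Ω + dist y x₀ :=
          Metric.infDist_le_infDist_add_dist
      _ = ‖y - x₀‖ := by
          rw [Metric.infDist_zero_of_mem_closure hx₀cl, dist_eq_norm, zero_add]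
      _ < R := hy
  have hkey1 : ∀ w : EuclideanSpace ℝ (Fin N), ‖w‖ < R → ⟪ξ, w⟫ ≤ A := by
    intro w hw
    have hu : x₀ - w ∈ extDom Ω Λ τ ε := by
      apply hmemext
      have : x₀ - w - x₀ = -w := by abel
      rw [this, norm_neg]
      exact hw
    have h1 := hξ _ hu
    have h2 := henv_nonneg _ hu
    have h3 : ⟪ξ, x₀ - w - x₀⟫ = -⟪ξ, w⟫ := by
      have : x₀ - w - x₀ = -w := by abel
      rw [this, inner_neg_right]
    rw [h3] at h1
    linarith
  have hnormR : ‖ξ‖ * R ≤ A := by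
    rcases eq_or_ne ξ 0 with h0 | h0
    · simpa [h0] using hA0
    · have hξn : 0 < ‖ξ‖ := norm_pos_iff.mpr h0
      by_contra hcon
      push_neg at hcon
      obtain ⟨r, hr1, hr2⟩ := exists_between (show A / ‖ξ‖ < R by rwa [div_lt_iff₀ hξn, mul_comm])
      have hr0 : 0 ≤ r := le_trans (div_nonneg hA0 hξn.le) hr1.le
      have hwn : ‖(r / ‖ξ‖) • ξ‖ < R := by
        rw [norm_smul, Real.norm_eq_abs, abs_div, abs_of_nonneg hr0, abs_of_nonneg hξn.le,
          div_mul_cancel₀ _ hξn.ne']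
        exact hr2
      have hk := hkey1 _ hwn
      rw [real_inner_smul_right, real_inner_self_eq_norm_sq] at hk
      rw [div_lt_iff₀ hξn] at hr1
      have : r / ‖ξ‖ * ‖ξ‖ ^ 2 = r * ‖ξ‖ := by field_simp
      rw [this] at hk
      linarith
  -- key affine bound on a slightly larger ball
  have hKEY : ∀ δ : ℝ, 0 < δ → ∀ y : EuclideanSpace ℝ (Fin N), ‖y - x₀‖ < R + δ →
      v y ≤ A + ⟪ξ, y - x₀⟫ + ‖ξ‖ * δ := by
    intro δ hδ y hy
    by_cases hyd : y ∈ extDom Ω Λ τ ε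
    · have h1 := hξ y hyd
      have h2 := henv_gev y hyd
      have : 0 ≤ ‖ξ‖ * δ := mul_nonneg (norm_nonneg _) hδ.le
      linarith
    · have hyΩ : y ∉ Ω := fun h => hyd (hΩsub h)
      have hv0 : v y ≤ 0 := by
        rw [← hnorm]
        exact le_csSup ⟨M, hbddc⟩ ⟨y, hyΩ, rfl⟩
      have hip : -(‖ξ‖ * ‖y - x₀‖) ≤ ⟪ξ, y - x₀⟫ :=
        (abs_le.mp (abs_real_inner_le_norm _ _)).1
      have h4 : ‖ξ‖ * ‖y - x₀‖ ≤ ‖ξ‖ * (R + δ) :=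
        mul_le_mul_of_nonneg_left hy.le (norm_nonneg ξ)
      nlinarith
  -- facts about the inner supremum
  have hSmem : ∀ x z : EuclideanSpace ℝ (Fin N),
      v (x - z) ∈ {s : ℝ | ∃ h : EuclideanSpace ℝ (Fin N), ‖h‖ < τ * ε ^ 2 ∧ s = v (x - z + h)} := by
    intro x z
    exact ⟨0, by simpa using hτε, by rw [add_zero]⟩
  have hSne : ∀ x z : EuclideanSpace ℝ (Fin N),
      {s : ℝ | ∃ h : EuclideanSpace ℝ (Fin N), ‖h‖ < τ * ε ^ 2 ∧ s = v (x - z + h)}.Nonempty :=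
    fun x z => ⟨_, hSmem x z⟩
  have hSbdd : ∀ x z : EuclideanSpace ℝ (Fin N),
      ∀ s ∈ {s : ℝ | ∃ h : EuclideanSpace ℝ (Fin N), ‖h‖ < τ * ε ^ 2 ∧ s = v (x - z + h)},
        s ≤ M := by
    rintro x z s ⟨h, -, rfl⟩
    exact (abs_le.mp (hM _)).2
  have hSleM : ∀ x z : EuclideanSpace ℝ (Fin N), innerSupAux τ ε v x z ≤ M :=
    fun x z => csSup_le (hSne x z) (hSbdd x z)
  have hSge : ∀ x z : EuclideanSpace ℝ (Fin N), v (x - z) ≤ innerSupAux τ ε v x z :=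
    fun x z => le_csSup ⟨M, hSbdd x z⟩ (hSmem x z)
  -- facts about the outer supremum
  have hWmem : ∀ x : EuclideanSpace ℝ (Fin N),
      (v (x + 0) + innerSupAux τ ε v x 0 - 2 * v x) / ε ^ 2 ∈
        {w : ℝ | ∃ z : EuclideanSpace ℝ (Fin N), ‖z‖ < Λ * ε ∧
          w = (v (x + z) + innerSupAux τ ε v x z - 2 * v x) / ε ^ 2} := by
    intro x
    exact ⟨0, by simpa using hΛε, rfl⟩
  have hWne : ∀ x : EuclideanSpace ℝ (Fin N),
      {w : ℝ | ∃ z : EuclideanSpace ℝ (Fin N), ‖z‖ < Λ * ε ∧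
        w = (v (x + z) + innerSupAux τ ε v x z - 2 * v x) / ε ^ 2}.Nonempty :=
    fun x => ⟨_, hWmem x⟩
  have hWbdd : ∀ x : EuclideanSpace ℝ (Fin N),
      ∀ w ∈ {w : ℝ | ∃ z : EuclideanSpace ℝ (Fin N), ‖z‖ < Λ * ε ∧
        w = (v (x + z) + innerSupAux τ ε v x z - 2 * v x) / ε ^ 2}, w ≤ 4 * M / ε ^ 2 := by
    rintro x w ⟨z, -, rfl⟩
    apply div_le_div_of_nonneg_right ?_ hε2.le
    have h1 : v (x + z) ≤ M := (abs_le.mp (hM _)).2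
    have h2 := hSleM x z
    have h3 := (abs_le.mp (hM x)).1
    linarith
  have hf0 : ∀ x : EuclideanSpace ℝ (Fin N), 0 ≤ locAux Λ τ ε v x := by
    intro x
    have hle : (v (x + 0) + innerSupAux τ ε v x 0 - 2 * v x) / ε ^ 2 ≤ locAux Λ τ ε v x := by
      apply le_csSup ⟨4 * M / ε ^ 2, hWbdd x⟩ (hWmem x)
    have h1 : v (x - 0) ≤ innerSupAux τ ε v x 0 := hSge x 0
    rw [sub_zero] at h1
    have h2 : 0 ≤ (v (x + 0) + innerSupAux τ ε v x 0 - 2 * v x) / ε ^ 2 := by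
      apply div_nonneg _ hε2.le
      rw [add_zero]
      linarith
    linarith
  -- pointwise estimate near x₀
  have hpt : ∀ δ : ℝ, 0 < δ → ∀ x : EuclideanSpace ℝ (Fin N), ‖x - x₀‖ < δ →
      locAux Λ τ ε v x ≤ (2 * (A - v x) + 4 * (‖ξ‖ * δ)) / ε ^ 2 + τ * ‖ξ‖ := by
    intro δ hδ x hx
    apply csSup_le (hWne x)
    rintro w ⟨z, hz, rfl⟩
    have h1 : v (x + z) ≤ A + ⟪ξ, x + z - x₀⟫ + ‖ξ‖ * δ := by
      apply hKEY δ hδ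
      have he : x + z - x₀ = (x - x₀) + z := by abel
      calc ‖x + z - x₀‖ ≤ ‖x - x₀‖ + ‖z‖ := by rw [he]; exact norm_add_le _ _
        _ < δ + Λ * ε := by linarith
        _ ≤ R + δ := by rw [hRdef]; nlinarith
    have h2 : innerSupAux τ ε v x z ≤ A + ⟪ξ, x - z - x₀⟫ + ‖ξ‖ * (τ * ε ^ 2) + ‖ξ‖ * δ := by
      apply csSup_le (hSne x z)
      rintro s ⟨h, hh, rfl⟩
      have hy : ‖x - z + h - x₀‖ < R + δ := by
        have he : x - z + h - x₀ = ((x - x₀) + (-z)) + h := by abel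
        calc ‖x - z + h - x₀‖ ≤ ‖(x - x₀) + (-z)‖ + ‖h‖ := by rw [he]; exact norm_add_le _ _
          _ ≤ ‖x - x₀‖ + ‖z‖ + ‖h‖ := by
              have := norm_add_le (x - x₀) (-z)
              rw [norm_neg] at this
              linarith
          _ < δ + Λ * ε + τ * ε ^ 2 := by linarith
          _ = R + δ := by rw [hRdef]; ring
      have hk := hKEY δ hδ _ hy
      have hsplit : ⟪ξ, x - z + h - x₀⟫ = ⟪ξ, x - z - x₀⟫ + ⟪ξ, h⟫ := by
        rw [← inner_add_right]
        congr 1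
        abel
      have hih : ⟪ξ, h⟫ ≤ ‖ξ‖ * (τ * ε ^ 2) :=
        le_trans (real_inner_le_norm _ _) (mul_le_mul_of_nonneg_left hh.le (norm_nonneg _))
      rw [hsplit] at hk
      linarith
    have h3 : ⟪ξ, x + z - x₀⟫ + ⟪ξ, x - z - x₀⟫ ≤ 2 * (‖ξ‖ * δ) := by
      have heq : ⟪ξ, x + z - x₀⟫ + ⟪ξ, x - z - x₀⟫ = ⟪ξ, x - x₀⟫ + ⟪ξ, x - x₀⟫ := by
        rw [← inner_add_right, ← inner_add_right]
        congr 1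
        abel
      have hb := real_inner_le_norm ξ (x - x₀)
      have hb2 := mul_le_mul_of_nonneg_left hx.le (norm_nonneg ξ)
      linarith
    have hnum : v (x + z) + innerSupAux τ ε v x z - 2 * v x ≤
        2 * (A - v x) + 4 * (‖ξ‖ * δ) + ‖ξ‖ * (τ * ε ^ 2) := by linarith
    calc (v (x + z) + innerSupAux τ ε v x z - 2 * v x) / ε ^ 2
        ≤ (2 * (A - v x) + 4 * (‖ξ‖ * δ) + ‖ξ‖ * (τ * ε ^ 2)) / ε ^ 2 := by
          exact div_le_div_of_nonneg_right hnum hε2.le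
      _ = (2 * (A - v x) + 4 * (‖ξ‖ * δ)) / ε ^ 2 + τ * ‖ξ‖ := by
          field_simp
  -- A is strictly positive
  have hApos : 0 < A := by
    rcases hA0.lt_or_eq with h | h
    · exact h
    · exfalso
      have hξ0 : ‖ξ‖ = 0 := by nlinarith [norm_nonneg ξ]
      have hvle : ∀ x ∈ Ω, v x ≤ 0 := by
        intro x hxΩ
        have hxe : x ∈ extDom Ω Λ τ ε := hΩsub hxΩ
        have h1 := hξ x hxe
        have h2 := henv_gev x hxe
        have h3 : ⟪ξ, x - x₀⟫ ≤ ‖ξ‖ * ‖x - x₀‖ := real_inner_le_norm _ _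
        rw [hξ0, zero_mul] at h3
        linarith
      have : sSup (v '' Ω) ≤ 0 :=
        Real.sSup_le (by rintro _ ⟨y, hy, rfl⟩; exact hvle y hy) le_rfl
      linarith
  -- boundedness of locAux from below
  have hbd : IsBoundedUnder (· ≥ ·) (𝓝 x₀) (locAux Λ τ ε v) :=
    isBoundedUnder_of ⟨0, hf0⟩
  -- main argument
  have key : ∀ b : ℝ, τ * ‖ξ‖ < b → Filter.liminf (locAux Λ τ ε v) (𝓝 x₀) ≤ b := by
    intro b hbgt
    set c : ℝ := b - τ * ‖ξ‖ with hcdef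
    have hc : 0 < c := by rw [hcdef]; linarith
    set δ : ℝ := c * ε ^ 2 / (8 * (‖ξ‖ + 1)) with hδdef
    have hξ1 : (0:ℝ) < ‖ξ‖ + 1 := by positivity
    have hδ : 0 < δ := by positivity
    set η : ℝ := min (A / 2) (c * ε ^ 2 / 8) with hηdef
    have hη : 0 < η := lt_min (by linarith) (by positivity)
    clear_value c δ η
    have hfreq : ∃ᶠ y in 𝓝 x₀, A - η < max (v y) (sSup (v '' Ωᶜ)) := by
      by_contra hcon
      rw [not_frequently] at hcon
      have hev : ∀ᶠ y in 𝓝 x₀, max (v y) (sSup (v '' Ωᶜ)) ≤ A - η :=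
        hcon.mono fun y hy => not_lt.mp hy
      have hcob : IsCoboundedUnder (· ≤ ·) (𝓝 x₀)
          (fun y => max (v y) (sSup (v '' Ωᶜ))) :=
        isCoboundedUnder_le_of_eventually_le _ (Eventually.of_forall fun y => by
          rw [hnorm]; exact le_max_right _ _)
      have hls := Filter.limsup_le_of_le hcob hev
      rw [hx₀lim] at hls
      have : A ≤ A - η := hls
      linarith
    have hev2 : ∀ᶠ y in 𝓝 x₀, ‖y - x₀‖ < δ := by
      filter_upwards [Metric.ball_mem_nhds x₀ hδ] with y hy
      rwa [mem_ball, dist_eq_norm] at hy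
    apply liminf_le_of_frequently_le _ hbd
    apply (hfreq.and_eventually hev2).mono
    rintro y ⟨hy1, hy2⟩
    have hg : A - η < max (v y) 0 := by rwa [hnorm] at hy1
    have hηA : η ≤ A / 2 := by rw [hηdef]; exact min_le_left _ _
    have hvy : A - η < v y := by
      rcases le_or_gt (v y) 0 with h | h
      · rw [max_eq_right h] at hg
        linarith
      · rwa [max_eq_left h.le] at hg
    have hp := hpt δ hδ y hy2
    have hδle : ‖ξ‖ * δ ≤ c * ε ^ 2 / 8 := by
      have h1 : ‖ξ‖ * δ ≤ (‖ξ‖ + 1) * δ :=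
        mul_le_mul_of_nonneg_right (by linarith) hδ.le
      have h2 : (‖ξ‖ + 1) * δ = c * ε ^ 2 / 8 := by
        rw [hδdef]
        field_simp
      linarith
    have hηle : η ≤ c * ε ^ 2 / 8 := by rw [hηdef]; exact min_le_right _ _
    have hnum : 2 * (A - v y) + 4 * (‖ξ‖ * δ) ≤ c * ε ^ 2 := by
      have : A - v y < η := by linarith
      linarith [mul_pos hc hε2]
    have hdivle : (2 * (A - v y) + 4 * (‖ξ‖ * δ)) / ε ^ 2 ≤ c := by
      rw [div_le_iff₀ hε2]
      linarith [mul_pos hc hε2]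
    have : locAux Λ τ ε v y ≤ c + τ * ‖ξ‖ := by linarith
    rw [hcdef] at this
    linarith
  by_contra hcon
  push_neg at hcon
  have := key ((τ * ‖ξ‖ + Filter.liminf (locAux Λ τ ε v) (𝓝 x₀)) / 2) (by linarith)
  linarith
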